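/- Let V' : [0,∞) → ℝ be continuous with V'(x) < 0 for all x ≥ 0, r : [0,∞) → ℝ continuous with r(0) = 0, and define Φ(x) = ∫_x^∞ (−1/V'(u) + r(u)) u^{−2} du for x > 0 (assumed convergent, with −1/V' + r bounded). If moreover r(u)/u → L ∈ ℝ as u → 0⁺, then lim_{x→0⁺} x·Φ(x) = 1/|V'(0)|. -/

import Mathlib

open MeasureTheory

lemma integral_inv_sq_helper {a b : ℝ} (ha : 0 < a) (hab : a ≤ b) :
    ∫ u in Set.Ioc a b, (u ^ 2)⁻¹ = a⁻¹ - b⁻¹ := by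
  rw [← intervalIntegral.integral_of_le hab]
  have h : ∀ u ∈ Set.uIcc a b, HasDerivAt (fun y : ℝ => -y⁻¹) ((u ^ 2)⁻¹) u := by
    intro u hu
    rw [Set.uIcc_of_le hab] at hu
    have hu0 : u ≠ 0 := ne_of_gt (lt_of_lt_of_le ha hu.1)
    simpa using (hasDerivAt_inv hu0).fun_neg
  have hi : IntervalIntegrable (fun u : ℝ => (u ^ 2)⁻¹) volume a b := by
    apply ContinuousOn.intervalIntegrable
    apply ((continuous_pow 2).continuousOn).inv₀
    intro u hu
    rw [Set.uIcc_of_le hab] at hu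
    exact pow_ne_zero 2 (ne_of_gt (lt_of_lt_of_le ha hu.1))
  rw [intervalIntegral.integral_eq_sub_of_hasDerivAt h hi]
  ring

lemma intOn_inv_sq_helper {a b : ℝ} (ha : 0 < a) :
    IntegrableOn (fun u : ℝ => (u ^ 2)⁻¹) (Set.Ioc a b) := by
  apply IntegrableOn.mono_set _ Set.Ioc_subset_Icc_self
  apply ContinuousOn.integrableOn_Icc
  apply ((continuous_pow 2).continuousOn).inv₀
  intro u hu
  exact pow_ne_zero 2 (ne_of_gt (lt_of_lt_of_le ha hu.1))

theorem potential_Phi_asymptotics_at_zero (V' r : ℝ → ℝ) (L : ℝ)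
    (hV'cont : ContinuousOn V' (Set.Ici 0))
    (hV'neg : ∀ x ≥ (0 : ℝ), V' x < 0)
    (hrcont : ContinuousOn r (Set.Ici 0))
    (hr0 : r 0 = 0)
    (hrL : Filter.Tendsto (fun u => r u / u) (nhdsWithin 0 (Set.Ioi 0)) (nhds L))
    (hbdd : ∃ B : ℝ, ∀ u > (0 : ℝ), |(-(1 / V' u) + r u)| ≤ B)
    (hint : ∀ x > (0 : ℝ), IntegrableOn (fun u => (-(1 / V' u) + r u) / u ^ 2) (Set.Ioi x))
    (Φ : ℝ → ℝ)
    (hΦ : Φ = fun x => ∫ u in Set.Ioi x, (-(1 / V' u) + r u) / u ^ 2) :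
    Filter.Tendsto (fun x => x * Φ x) (nhdsWithin 0 (Set.Ioi 0)) (nhds (1 / |V' 0|)) := by
  subst hΦ
  set g : ℝ → ℝ := fun u => -(1 / V' u) + r u with hg
  set c : ℝ := 1 / |V' 0| with hcdef
  have hV0 : V' 0 < 0 := hV'neg 0 le_rfl
  have hc : c = -(1 / V' 0) := by
    rw [hcdef, abs_of_neg hV0, div_neg]
  have hgcont : ContinuousOn g (Set.Ici 0) := by
    apply ContinuousOn.add
    · exact (continuousOn_const.div hV'cont fun x hx => (hV'neg x hx).ne).neg
    · exact hrcont
  have hg0 : g 0 = c := by simp [hg, hr0, hc]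
  have hgt : Filter.Tendsto g (nhdsWithin 0 (Set.Ici 0)) (nhds c) :=
    hg0 ▸ (hgcont 0 Set.self_mem_Ici)
  rw [Metric.tendsto_nhdsWithin_nhds]
  intro ε hε
  obtain ⟨δ₁, hδ₁pos, hδ₁⟩ := Metric.tendsto_nhdsWithin_nhds.mp hgt (ε / 4) (by positivity)
  set δ₀ : ℝ := δ₁ / 2 with hδ₀def
  have hδ₀pos : 0 < δ₀ := by positivity
  set K : ℝ := ∫ u in Set.Ioi δ₀, g u / u ^ 2 with hKdef
  refine ⟨min δ₀ (min (ε / (4 * (|K| + 1))) (ε * δ₀ / (4 * (|c| + 1)))), by positivity, ?_⟩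
  intro x hx hdist
  have hx0 : 0 < x := Set.mem_Ioi.mp hx
  rw [Real.dist_eq, sub_zero, abs_of_pos hx0] at hdist
  have hxδ₀ : x < δ₀ := lt_of_lt_of_le hdist (min_le_left _ _)
  have hxK : x * (4 * (|K| + 1)) < ε := by
    have h := lt_of_lt_of_le hdist ((min_le_right _ _).trans (min_le_left _ _))
    exact (lt_div_iff₀ (by positivity)).mp h
  have hxc : x * (4 * (|c| + 1)) < ε * δ₀ := by
    have h := lt_of_lt_of_le hdist ((min_le_right _ _).trans (min_le_right _ _))
    exact (lt_div_iff₀ (by positivity)).mp h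
  -- integrability
  have hfIoc : IntegrableOn (fun u => g u / u ^ 2) (Set.Ioc x δ₀) :=
    (hint x hx0).mono_set Set.Ioc_subset_Ioi_self
  have hfIoi : IntegrableOn (fun u => g u / u ^ 2) (Set.Ioi δ₀) := hint δ₀ hδ₀pos
  have hφ : IntegrableOn (fun u : ℝ => (u ^ 2)⁻¹) (Set.Ioc x δ₀) := intOn_inv_sq_helper hx0
  have heq : (fun u => (g u - c) * (u ^ 2)⁻¹) = fun u => g u / u ^ 2 - c * (u ^ 2)⁻¹ := by
    funext u; rw [div_eq_mul_inv]; ring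
  have hInt1 : IntegrableOn (fun u => (g u - c) * (u ^ 2)⁻¹) (Set.Ioc x δ₀) :=
    heq ▸ (hfIoc.sub (hφ.const_mul c))
  -- splitting the integral
  have hsplit : ∫ u in Set.Ioi x, g u / u ^ 2
      = (∫ u in Set.Ioc x δ₀, g u / u ^ 2) + K := by
    rw [hKdef, ← setIntegral_union ?_ measurableSet_Ioi hfIoc hfIoi]
    · rw [Set.Ioc_union_Ioi_eq_Ioi hxδ₀.le]
    · exact Set.disjoint_left.mpr fun u hu hu' => absurd hu.2 (not_le.mpr hu')
  -- pointwise bound on g near 0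
  have hgc : ∀ u ∈ Set.Ioc x δ₀, |g u - c| ≤ ε / 4 := by
    intro u hu
    have hui : u ∈ Set.Ici (0 : ℝ) := (hx0.trans hu.1).le
    have hud : dist u 0 < δ₁ := by
      rw [Real.dist_eq, sub_zero, abs_of_pos (hx0.trans hu.1)]
      calc u ≤ δ₀ := hu.2
        _ < δ₁ := by rw [hδ₀def]; linarith
    have := hδ₁ hui hud
    rw [Real.dist_eq] at this
    exact this.le
  -- main decomposition on Ioc
  set E : ℝ := ∫ u in Set.Ioc x δ₀, (g u - c) * (u ^ 2)⁻¹ with hEdef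
  have hmain : ∫ u in Set.Ioc x δ₀, g u / u ^ 2 = E + c * (x⁻¹ - δ₀⁻¹) := by
    have hdecomp : ∀ u : ℝ, g u / u ^ 2 = (g u - c) * (u ^ 2)⁻¹ + c * (u ^ 2)⁻¹ := by
      intro u; rw [div_eq_mul_inv]; ring
    calc ∫ u in Set.Ioc x δ₀, g u / u ^ 2
        = ∫ u in Set.Ioc x δ₀, ((g u - c) * (u ^ 2)⁻¹ + c * (u ^ 2)⁻¹) := by
          simp only [hdecomp]
      _ = E + ∫ u in Set.Ioc x δ₀, c * (u ^ 2)⁻¹ := integral_add hInt1 (hφ.const_mul c)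
      _ = E + c * (x⁻¹ - δ₀⁻¹) := by
          rw [MeasureTheory.integral_const_mul _ _, integral_inv_sq_helper hx0 hxδ₀.le]
  -- bound on E
  have hE : |E| ≤ ε / 4 * x⁻¹ := by
    have h1 : |E| ≤ ∫ u in Set.Ioc x δ₀, |(g u - c) * (u ^ 2)⁻¹| := by
      simpa only [Real.norm_eq_abs, hEdef] using
        norm_integral_le_integral_norm (μ := volume.restrict (Set.Ioc x δ₀))
          (fun u => (g u - c) * (u ^ 2)⁻¹)
    have h2 : ∫ u in Set.Ioc x δ₀, |(g u - c) * (u ^ 2)⁻¹|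
        ≤ ∫ u in Set.Ioc x δ₀, ε / 4 * (u ^ 2)⁻¹ := by
      apply setIntegral_mono_on hInt1.abs (hφ.const_mul (ε / 4)) measurableSet_Ioc
      intro u hu
      rw [abs_mul, abs_of_nonneg (inv_nonneg.mpr (sq_nonneg u))]
      exact mul_le_mul_of_nonneg_right (hgc u hu) (by positivity)
    have h3 : ∫ u in Set.Ioc x δ₀, ε / 4 * (u ^ 2)⁻¹ = ε / 4 * (x⁻¹ - δ₀⁻¹) := by
      rw [MeasureTheory.integral_const_mul _ _, integral_inv_sq_helper hx0 hxδ₀.le]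
    have h4 : ε / 4 * (x⁻¹ - δ₀⁻¹) ≤ ε / 4 * x⁻¹ := by
      have : (0:ℝ) ≤ δ₀⁻¹ := by positivity
      nlinarith
    linarith
  -- final computation
  rw [Real.dist_eq]
  have key : x * (∫ u in Set.Ioi x, g u / u ^ 2) - c
      = x * E - c * (x * δ₀⁻¹) + x * K := by
    rw [hsplit, hmain]
    have hx1 : x * x⁻¹ = 1 := mul_inv_cancel₀ (ne_of_gt hx0)
    linear_combination c * hx1
  rw [key]
  have b1 : |x * E| ≤ ε / 4 := by
    rw [abs_mul, abs_of_pos hx0]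
    calc x * |E| ≤ x * (ε / 4 * x⁻¹) := by
          exact mul_le_mul_of_nonneg_left hE hx0.le
      _ = ε / 4 * (x * x⁻¹) := by ring
      _ = ε / 4 := by rw [mul_inv_cancel₀ (ne_of_gt hx0), mul_one]
  have b2 : |c * (x * δ₀⁻¹)| ≤ ε / 4 := by
    rw [abs_mul, abs_of_pos (by positivity : (0:ℝ) < x * δ₀⁻¹)]
    have hδ₀inv : (0:ℝ) < δ₀⁻¹ := by positivity
    have h : |c| * x ≤ ε / 4 * δ₀ := by nlinarith [abs_nonneg c]
    calc |c| * (x * δ₀⁻¹) = (|c| * x) * δ₀⁻¹ := by ring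
      _ ≤ (ε / 4 * δ₀) * δ₀⁻¹ := mul_le_mul_of_nonneg_right h hδ₀inv.le
      _ = ε / 4 * (δ₀ * δ₀⁻¹) := by ring
      _ = ε / 4 := by rw [mul_inv_cancel₀ (ne_of_gt hδ₀pos), mul_one]
  have b3 : |x * K| ≤ ε / 4 := by
    rw [abs_mul, abs_of_pos hx0]
    nlinarith [abs_nonneg K]
  obtain ⟨b1a, b1b⟩ := abs_le.mp b1
  obtain ⟨b2a, b2b⟩ := abs_le.mp b2
  obtain ⟨b3a, b3b⟩ := abs_le.mp b3
  rw [abs_lt]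
  constructor <;> linarith
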